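/- Let R₀ be the free 𝒪_k-submodule of k[T,T⁻¹,Z] spanned by (ϖT)ᵃ(ϖZ)ᵇ with b ≥ 0 and a ≥ -b², and R = kR₀. Then R° = R₀; in particular the Tate ring R (with ring of definition R₀) is uniform. -/

import Mathlib

/-- The valuation ring `𝒪_k = {c : k | ‖c‖ ≤ 1}` of a non-archimedean normed field. -/
def valuationSubring (k : Type*) [NormedField k] [IsUltrametricDist k] : Subring k where
  carrier := {c | ‖c‖ ≤ 1}
  one_mem' := by simp
  zero_mem' := by simp
  neg_mem' := by simp
  mul_mem' := by
    intro a b ha hb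
    simp only [Set.mem_setOf_eq] at *
    calc ‖a * b‖ = ‖a‖ * ‖b‖ := norm_mul a b
      _ ≤ 1 * 1 := mul_le_mul ha hb (norm_nonneg b) zero_le_one
      _ = 1 := one_mul 1
  add_mem' := by
    intro a b ha hb
    simp only [Set.mem_setOf_eq] at *
    exact le_trans (IsUltrametricDist.norm_add_le_max a b) (max_le ha hb)

namespace UniformExampleAux

open AddMonoidAlgebra Finsupp Submodule

variable {k : Type*} [NontriviallyNormedField k] [IsUltrametricDist k]

/-- coefficient-wise description of membership in `R₀` -/
def GoodCoeff (ϖ : k) (r : AddMonoidAlgebra k (ℤ × ℕ)) : Prop :=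
  ∀ (a : ℤ) (b : ℕ), (r.coeff (a, b) ≠ 0 → -(b : ℤ) ^ 2 ≤ a) ∧ ‖r.coeff (a, b)‖ ≤ ‖ϖ‖ ^ (a + b : ℤ)

/-- the generating set of `R₀` -/
def genSet (ϖ : k) : Set (AddMonoidAlgebra k (ℤ × ℕ)) :=
  {x | ∃ (a : ℤ) (b : ℕ), -(b : ℤ) ^ 2 ≤ a ∧
      x = ϖ ^ (a + b) • AddMonoidAlgebra.single (a, b) (1 : k)}

variable {ϖ : k}

theorem good_of_mem (hϖ0 : 0 < ‖ϖ‖) {r : AddMonoidAlgebra k (ℤ × ℕ)}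
    (hr : r ∈ Submodule.span (valuationSubring k) (genSet ϖ)) : GoodCoeff ϖ r := by
  induction hr using Submodule.span_induction with
  | mem x hx =>
    obtain ⟨a, b, hab, rfl⟩ := hx
    intro a' b'
    have hval : (ϖ ^ (a + b : ℤ) • AddMonoidAlgebra.single ((a : ℤ), b) (1 : k)).coeff (a', b')
        = if ((a : ℤ), b) = (a', b') then ϖ ^ (a + b : ℤ) else 0 := by
      simp [Finsupp.single_apply, AddMonoidAlgebra.coeff_single]
    rw [hval]
    split_ifs with hif
    · obtain ⟨rfl, rfl⟩ := Prod.mk.injEq .. ▸ hif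
      exact ⟨fun _ => hab, by rw [norm_zpow]⟩
    · exact ⟨fun h => absurd rfl h, by rw [norm_zero]; positivity⟩
  | zero => intro a b; simp [GoodCoeff]; positivity
  | add x y hx hy ihx ihy =>
    intro a b
    refine ⟨fun h => ?_, ?_⟩
    · rw [AddMonoidAlgebra.coeff_add, Finsupp.add_apply] at h
      rcases (by by_contra hc; push_neg at hc; simp [hc.1, hc.2] at h :
          x.coeff (a, b) ≠ 0 ∨ y.coeff (a, b) ≠ 0) with h' | h'
      · exact (ihx a b).1 h'
      · exact (ihy a b).1 h'
    · rw [AddMonoidAlgebra.coeff_add, Finsupp.add_apply]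
      exact le_trans (IsUltrametricDist.norm_add_le_max _ _)
        (max_le (ihx a b).2 (ihy a b).2)
  | smul c x hx ihx =>
    intro a b
    have hc : ‖(c : k)‖ ≤ 1 := c.2
    have happ : ((c • x : AddMonoidAlgebra k (ℤ × ℕ)).coeff (a, b)) = (c : k) * x.coeff (a, b) := rfl
    refine ⟨fun h => (ihx a b).1 fun h0 => by simp [happ, h0] at h, ?_⟩
    rw [happ, norm_mul]
    calc ‖(c : k)‖ * ‖x.coeff (a, b)‖ ≤ 1 * (‖ϖ‖ ^ (a + b : ℤ)) :=
          mul_le_mul hc (ihx a b).2 (norm_nonneg _) zero_le_one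
      _ = ‖ϖ‖ ^ (a + b : ℤ) := one_mul _

theorem single_mem (hϖ0 : 0 < ‖ϖ‖) {a : ℤ} {b : ℕ} {c : k} (hab : -(b : ℤ) ^ 2 ≤ a)
    (hc : ‖c‖ ≤ ‖ϖ‖ ^ (a + b : ℤ)) :
    AddMonoidAlgebra.single ((a : ℤ), b) c ∈ Submodule.span (valuationSubring k) (genSet ϖ) := by
  have hϖne : ϖ ≠ 0 := norm_pos_iff.mp hϖ0
  have hzne : ϖ ^ (a + b : ℤ) ≠ 0 := zpow_ne_zero _ hϖne
  have hcnorm : ‖c / ϖ ^ (a + b : ℤ)‖ ≤ 1 := by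
    rw [norm_div, norm_zpow]
    exact (div_le_one (zpow_pos hϖ0 _)).mpr hc
  have key : AddMonoidAlgebra.single ((a : ℤ), b) c
      = (⟨c / ϖ ^ (a + b : ℤ), hcnorm⟩ : valuationSubring k) •
        (ϖ ^ (a + b : ℤ) • AddMonoidAlgebra.single ((a : ℤ), b) (1 : k)) := by
    have : ((⟨c / ϖ ^ (a + b : ℤ), hcnorm⟩ : valuationSubring k) •
        (ϖ ^ (a + b : ℤ) • AddMonoidAlgebra.single ((a : ℤ), b) (1 : k)))
        = (c / ϖ ^ (a + b : ℤ)) • (ϖ ^ (a + b : ℤ) •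
            AddMonoidAlgebra.single ((a : ℤ), b) (1 : k)) := rfl
    rw [this, smul_smul, div_mul_cancel₀ _ hzne, AddMonoidAlgebra.smul_single, smul_eq_mul, mul_one]
  rw [key]
  exact Submodule.smul_mem _ _ (Submodule.subset_span ⟨a, b, hab, rfl⟩)

theorem mem_of_good (hϖ0 : 0 < ‖ϖ‖) {r : AddMonoidAlgebra k (ℤ × ℕ)} (hr : GoodCoeff ϖ r) :
    r ∈ Submodule.span (valuationSubring k) (genSet ϖ) := by
  rw [← AddMonoidAlgebra.sum_coeff_single r, Finsupp.sum]
  refine Submodule.sum_mem _ fun p hp => ?_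
  obtain ⟨a, b⟩ := p
  exact single_mem hϖ0 ((hr a b).1 (Finsupp.mem_support_iff.mp hp)) (hr a b).2

theorem one_mem_genSpan (hϖ0 : 0 < ‖ϖ‖) :
    (1 : AddMonoidAlgebra k (ℤ × ℕ)) ∈ Submodule.span (valuationSubring k) (genSet ϖ) := by
  refine Submodule.subset_span ⟨0, 0, by norm_num, ?_⟩
  simp [AddMonoidAlgebra.one_def]; rfl

theorem mul_mem_genSpan (hϖ0 : 0 < ‖ϖ‖) {x y : AddMonoidAlgebra k (ℤ × ℕ)}
    (hx : x ∈ Submodule.span (valuationSubring k) (genSet ϖ))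
    (hy : y ∈ Submodule.span (valuationSubring k) (genSet ϖ)) :
    x * y ∈ Submodule.span (valuationSubring k) (genSet ϖ) := by
  induction hx using Submodule.span_induction generalizing y with
  | mem x hxg =>
    induction hy using Submodule.span_induction with
    | mem y hyg =>
      obtain ⟨a, b, hab, rfl⟩ := hxg
      obtain ⟨a', b', hab', rfl⟩ := hyg
      refine Submodule.subset_span ⟨a + a', b + b', by push_cast; nlinarith [mul_nonneg (by positivity : (0:ℤ) ≤ (b:ℤ)) (by positivity : (0:ℤ) ≤ (b':ℤ))], ?_⟩
      rw [smul_mul_assoc, mul_smul_comm, smul_smul, AddMonoidAlgebra.single_mul_single,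
        one_mul, ← zpow_add₀ (norm_pos_iff.mp hϖ0)]
      rw [show ((a : ℤ) + (b : ℤ)) + ((a' : ℤ) + (b' : ℤ)) = ((a + a' : ℤ) + ((b + b' : ℕ) : ℤ))
        by push_cast; ring]
      rfl
    | zero => rw [mul_zero]; exact Submodule.zero_mem _
    | add y z _ _ ihy ihz => rw [mul_add]; exact Submodule.add_mem _ ihy ihz
    | smul c y _ ihy => rw [mul_smul_comm]; exact Submodule.smul_mem _ _ ihy
  | zero => rw [zero_mul]; exact Submodule.zero_mem _
  | add x x' _ _ ihx ihx' => rw [add_mul]; exact Submodule.add_mem _ (ihx hy) (ihx' hy)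
  | smul c x _ ihx => rw [smul_mul_assoc]; exact Submodule.smul_mem _ _ (ihx hy)

theorem pow_mem_genSpan (hϖ0 : 0 < ‖ϖ‖) {x : AddMonoidAlgebra k (ℤ × ℕ)}
    (hx : x ∈ Submodule.span (valuationSubring k) (genSet ϖ)) (m : ℕ) :
    x ^ m ∈ Submodule.span (valuationSubring k) (genSet ϖ) := by
  induction m with
  | zero => rw [pow_zero]; exact one_mem_genSpan hϖ0
  | succ m ih => rw [pow_succ]; exact mul_mem_genSpan hϖ0 ih hx

theorem mul_apply_of_le {p q : AddMonoidAlgebra k (ℤ × ℕ)} {u v : ℤ × ℕ}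
    (hu : ∀ x ∈ p.coeff.support, toLex x ≤ toLex u) (hv : ∀ x ∈ q.coeff.support, toLex x ≤ toLex v) :
    (p * q).coeff (u + v) = p.coeff u * q.coeff v := by
  classical
  rw [AddMonoidAlgebra.coeff_mul]
  simp_rw [Finsupp.sum]
  rw [Finset.sum_eq_single u, Finset.sum_eq_single v, if_pos rfl]
  · refine fun b hb hne => if_neg fun he => hne ?_
    have : toLex u + toLex b = toLex u + toLex v := congrArg toLex he
    exact toLex.injective (add_left_cancel this)
  · intro h
    rw [if_pos rfl, Finsupp.notMem_support_iff.1 h, mul_zero]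
  · refine fun a ha hne => Finset.sum_eq_zero fun b hb => if_neg fun he => ?_
    have h1 : toLex a < toLex u := lt_of_le_of_ne (hu a ha) (fun h => hne (toLex.injective h))
    have h2 : toLex a + toLex b < toLex u + toLex v :=
      add_lt_add_of_lt_of_le h1 (hv b hb)
    exact absurd (congrArg toLex he) h2.ne
  · refine fun h => Finset.sum_eq_zero fun b _ => ite_eq_right_iff.mpr fun _ => ?_
    rw [Finsupp.notMem_support_iff.mp h, zero_mul]

theorem pow_apply_of_le {r : AddMonoidAlgebra k (ℤ × ℕ)} {u : ℤ × ℕ}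
    (hu : ∀ x ∈ r.coeff.support, toLex x ≤ toLex u) (m : ℕ) :
    (∀ x ∈ (r ^ m).coeff.support, toLex x ≤ toLex (m • u)) ∧ (r ^ m).coeff (m • u) = r.coeff u ^ m := by
  classical
  induction m with
  | zero =>
    constructor
    · intro x hx
      rw [pow_zero, AddMonoidAlgebra.one_def] at hx
      have hx0 : x = 0 := by
        have := Finsupp.support_single_subset hx
        rwa [Finset.mem_singleton] at this
      simp [hx0, zero_nsmul]
    · simp [zero_nsmul, AddMonoidAlgebra.one_def, Finsupp.single_apply]
  | succ m ih =>
    have hmul : ∀ x ∈ (r ^ m * r).coeff.support, toLex x ≤ toLex (m • u + u) := by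
      intro x hx
      obtain ⟨y, hy, z, hz, rfl⟩ := Finset.mem_add.mp (AddMonoidAlgebra.support_coeff_mul_subset _ _ hx)
      exact add_le_add (ih.1 y hy) (hu z hz)
    constructor
    · intro x hx
      rw [pow_succ] at hx
      rw [succ_nsmul]
      exact hmul x hx
    · rw [pow_succ, succ_nsmul, mul_apply_of_le ih.1 hu, ih.2, pow_succ]

theorem forward (hϖ0 : 0 < ‖ϖ‖) (N : ℕ) (r : AddMonoidAlgebra k (ℤ × ℕ))
    (h : ∀ m : ℕ, ϖ ^ N • r ^ m ∈ Submodule.span (valuationSubring k) (genSet ϖ)) :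
    r ∈ Submodule.span (valuationSubring k) (genSet ϖ) := by
  classical
  have hϖne : ϖ ≠ 0 := norm_pos_iff.mp hϖ0
  generalize hn : r.coeff.support.card = n
  induction n using Nat.strong_induction_on generalizing r with
  | _ n IH =>
  by_cases hr0 : r = 0
  · rw [hr0]; exact Submodule.zero_mem _
  have hsupp : r.coeff.support.Nonempty := Finsupp.support_nonempty_iff.mpr (mt AddMonoidAlgebra.coeff_eq_zero.mp hr0)
  have hSne : (r.coeff.support.image toLex).Nonempty := hsupp.image _
  obtain ⟨p, hp, hpl⟩ := Finset.mem_image.mp ((r.coeff.support.image toLex).max'_mem hSne)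
  have hmax : ∀ x ∈ r.coeff.support, toLex x ≤ toLex p := fun x hx =>
    hpl ▸ Finset.le_max' _ _ (Finset.mem_image_of_mem _ hx)
  obtain ⟨a, b⟩ := p
  have hc : r.coeff (a, b) ≠ 0 := Finsupp.mem_support_iff.mp hp
  -- Step 1: the support condition at (a, b)
  have ha : -(b : ℤ) ^ 2 ≤ a := by
    refine ((good_of_mem hϖ0 (h 1)) a b).1 ?_
    have : (ϖ ^ N • r ^ 1).coeff (a, b) = ϖ ^ N * r.coeff (a, b) := by rw [pow_one]; rfl
    rw [this]
    exact mul_ne_zero (pow_ne_zero _ hϖne) hc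
  -- Step 2: the norm bound at (a, b)
  have key : ∀ m : ℕ, ‖ϖ‖ ^ N * ‖r.coeff (a, b)‖ ^ m ≤ (‖ϖ‖ ^ ((a : ℤ) + b)) ^ m := by
    intro m
    have gm := ((good_of_mem hϖ0 (h m)) ((m : ℤ) * a) (m * b)).2
    have hpt : ((m : ℤ) * a, m * b) = m • ((a, b) : ℤ × ℕ) := by
      show _ = (m • a, m • b)
      simp [nsmul_eq_mul]
    rw [hpt] at gm
    have happ : (ϖ ^ N • r ^ m).coeff (m • ((a, b) : ℤ × ℕ))
        = ϖ ^ N * (r ^ m).coeff (m • ((a, b) : ℤ × ℕ)) := rfl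
    rw [happ, (pow_apply_of_le hmax m).2] at gm
    rw [norm_mul, norm_pow, norm_pow] at gm
    refine le_trans gm ?_
    rw [← zpow_natCast (‖ϖ‖ ^ ((a : ℤ) + b)) m, ← zpow_mul]
    apply le_of_eq
    congr 1
    push_cast
    ring
  have hb : ‖r.coeff (a, b)‖ ≤ ‖ϖ‖ ^ ((a : ℤ) + b) := by
    by_contra hlt
    push_neg at hlt
    set w : ℝ := ‖ϖ‖ ^ ((a : ℤ) + b) with hw
    have hwpos : 0 < w := zpow_pos hϖ0 _
    have hone : 1 < ‖r.coeff (a, b)‖ / w := (one_lt_div hwpos).mpr hlt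
    obtain ⟨m, hm⟩ := pow_unbounded_of_one_lt ((‖ϖ‖ ^ N)⁻¹) hone
    have hNpos : (0 : ℝ) < ‖ϖ‖ ^ N := pow_pos hϖ0 N
    have h2 : (‖r.coeff (a, b)‖ / w) ^ m ≤ (‖ϖ‖ ^ N)⁻¹ := by
      rw [div_pow, div_le_iff₀ (pow_pos hwpos m)]
      calc ‖r.coeff (a, b)‖ ^ m
          = (‖ϖ‖ ^ N)⁻¹ * (‖ϖ‖ ^ N * ‖r.coeff (a, b)‖ ^ m) := by field_simp
        _ ≤ (‖ϖ‖ ^ N)⁻¹ * w ^ m := by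
            have := key m
            gcongr
        _ = (‖ϖ‖ ^ N)⁻¹ * w ^ m := rfl
    exact absurd h2 (not_le.mpr hm)
  -- Step 3: the leading term is in the span
  have ht : AddMonoidAlgebra.single ((a : ℤ), b) (r.coeff (a, b))
      ∈ Submodule.span (valuationSubring k) (genSet ϖ) := single_mem hϖ0 ha hb
  -- Step 4: the rest of r is power-bounded with the same N
  set r' : AddMonoidAlgebra k (ℤ × ℕ) := AddMonoidAlgebra.erase (a, b) r with hr'def
  have hre : AddMonoidAlgebra.single ((a : ℤ), b) (r.coeff (a, b)) + r' = r :=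
    AddMonoidAlgebra.single_add_erase _ r
  have hsub : r' = r - AddMonoidAlgebra.single ((a : ℤ), b) (r.coeff (a, b)) :=
    eq_sub_of_add_eq' hre
  have hpb : ∀ m : ℕ, ϖ ^ N • r' ^ m
      ∈ Submodule.span (valuationSubring k) (genSet ϖ) := by
    intro m
    rw [hsub, sub_eq_add_neg, add_pow, Finset.smul_sum]
    refine Submodule.sum_mem _ fun j hj => ?_
    have heq : ϖ ^ N • (r ^ j * (-AddMonoidAlgebra.single ((a : ℤ), b) (r.coeff (a, b))) ^ (m - j)
          * (m.choose j : AddMonoidAlgebra k (ℤ × ℕ)))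
        = (m.choose j) • ((ϖ ^ N • r ^ j)
          * (-AddMonoidAlgebra.single ((a : ℤ), b) (r.coeff (a, b))) ^ (m - j)) := by
      rw [mul_comm _ (m.choose j : AddMonoidAlgebra k (ℤ × ℕ)), ← nsmul_eq_mul,
        smul_comm, smul_mul_assoc]
    rw [heq]
    exact nsmul_mem (mul_mem_genSpan hϖ0 (h j)
      (pow_mem_genSpan hϖ0 (Submodule.neg_mem _ ht) _)) _
  -- Step 5: induction on the size of the support
  have hcard : r'.coeff.support.card < n := by
    rw [hr'def, AddMonoidAlgebra.coeff_erase, Finsupp.support_erase, ← hn]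
    exact Finset.card_erase_lt_of_mem hp
  have hr' := IH _ hcard _ hpb rfl
  rw [← hre]
  exact Submodule.add_mem _ ht hr'

end UniformExampleAux

/-- With `R₀ ⊆ k[T,T⁻¹,Z]` spanned over `𝒪_k` by `(ϖT)ᵃ(ϖZ)ᵇ`
(`b ≥ 0`, `a ≥ -b²`) and `R = kR₀`, the power-bounded subring of the Tate ring `R`
(with ring of definition `R₀`) equals `R₀`; in particular `R` is uniform. -/
theorem uniform_example_powerBounded_eq
    (k : Type*) [NontriviallyNormedField k] [IsUltrametricDist k] [CompleteSpace k]
    (ϖ : k) (hϖ0 : 0 < ‖ϖ‖) (hϖ1 : ‖ϖ‖ < 1)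
    (R₀ : Submodule (valuationSubring k) (AddMonoidAlgebra k (ℤ × ℕ)))
    (hR₀ : R₀ = Submodule.span (valuationSubring k)
      {x : AddMonoidAlgebra k (ℤ × ℕ) | ∃ (a : ℤ) (b : ℕ),
        -(b : ℤ) ^ 2 ≤ a ∧
        x = ϖ ^ (a + b) • AddMonoidAlgebra.single (a, b) (1 : k)}) :
    (∀ r ∈ Submodule.span k (R₀ : Set (AddMonoidAlgebra k (ℤ × ℕ))),
      ((∃ N : ℕ, ∀ m : ℕ, ϖ ^ N • r ^ m ∈ R₀) ↔ r ∈ R₀)) ∧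
    ∃ N : ℕ, ∀ r ∈ Submodule.span k (R₀ : Set (AddMonoidAlgebra k (ℤ × ℕ))),
      (∃ N' : ℕ, ∀ m : ℕ, ϖ ^ N' • r ^ m ∈ R₀) → ϖ ^ N • r ∈ R₀ := by
  have hgen : R₀ = Submodule.span (valuationSubring k) (UniformExampleAux.genSet ϖ) := hR₀
  subst hgen
  constructor
  · intro r _
    constructor
    · rintro ⟨N, h⟩
      exact UniformExampleAux.forward hϖ0 N r h
    · intro hr
      refine ⟨0, fun m => ?_⟩
      rw [pow_zero, one_smul]
      exact UniformExampleAux.pow_mem_genSpan hϖ0 hr m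
  · refine ⟨0, fun r _ h => ?_⟩
    obtain ⟨N', hN'⟩ := h
    rw [pow_zero, one_smul]
    exact UniformExampleAux.forward hϖ0 N' r hN'
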